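/- Let F be a field, n ≥ 1, α, β ≥ 0 integers, and let H be an (nα) × (nα) matrix over F written in n×n block form with α×α blocks A_{i,j}, where A_{i,i} = I_α for all i and rank(A_{i,j}) ≤ β for all i ≠ j. Then rank(H) ≥ ∑_{j=1}^{n} max(α - (j-1)β, 0). -/

import Mathlib

open Submodule Module Matrix

section helpers

variable {K V W : Type*} [Field K] [AddCommGroup V] [Module K V] [AddCommGroup W] [Module K W]

lemma finrank_biSup_le [FiniteDimensional K V] {ι : Type*} (s : Finset ι)
    (p : ι → Submodule K V) :
    Module.finrank K ↥(⨆ i ∈ s, p i) ≤ ∑ i ∈ s, Module.finrank K ↥(p i) := by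
  classical
  induction s using Finset.induction with
  | empty => simp
  | @insert a s h ih =>
    rw [Finset.sum_insert h, Finset.iSup_insert]
    have h2 : Module.finrank K ↥(p a ⊔ ⨆ i ∈ s, p i) ≤
        Module.finrank K ↥(p a) + Module.finrank K ↥(⨆ i ∈ s, p i) := by
      have := Submodule.finrank_sup_add_finrank_inf_eq (p a) (⨆ i ∈ s, p i)
      omega
    exact h2.trans (by omega)

lemma finrank_exchange [FiniteDimensional K V] (π : V →ₗ[K] W) {U1 U2 : Submodule K V}
    (h : U1 ≤ U2) :
    Module.finrank K U1 + Module.finrank K ↥(U2.map π) ≤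
      Module.finrank K U2 + Module.finrank K ↥(U1.map π) := by
  have key : ∀ U : Submodule K V, Module.finrank K U =
      Module.finrank K ↥(U.map π) + Module.finrank K ↥(U ⊓ LinearMap.ker π) := by
    intro U
    have h1 := LinearMap.finrank_range_add_finrank_ker (π.comp U.subtype)
    rw [LinearMap.range_comp, Submodule.range_subtype, LinearMap.ker_comp] at h1
    rw [← h1]
    congr 1
    rw [← Submodule.finrank_map_subtype_eq U, Submodule.map_comap_subtype]
  have hm : Module.finrank K ↥(U1 ⊓ LinearMap.ker π) ≤ Module.finrank K ↥(U2 ⊓ LinearMap.ker π) :=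
    Submodule.finrank_mono (inf_le_inf_right _ h)
  rw [key U1, key U2]
  omega

end helpers

/-- For a repair-structured block matrix, rank(H) ≥ ∑_{j=1}^n max(α - (j-1)β, 0). -/
theorem repair_matrix_rank_lower_bound (F : Type*) [Field F] (n α β : ℕ) (hn : 1 ≤ n)
    (A : Fin n → Fin n → Matrix (Fin α) (Fin α) F)
    (H : Matrix (Fin n × Fin α) (Fin n × Fin α) F)
    (hH : ∀ i j a b, H (i, a) (j, b) = A i j a b)
    (hdiag : ∀ i, A i i = 1)
    (hoff : ∀ i j, i ≠ j → (A i j).rank ≤ β) :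
    ∑ j ∈ Finset.range n, (α - j * β) ≤ H.rank := by
  classical
  let W : ℕ → Submodule F (Fin n × Fin α → F) :=
    fun j => Submodule.span F (Set.image Hᵀ ({p : Fin n × Fin α | (p.1 : ℕ) < j}))
  have hWmono : ∀ {j k : ℕ}, j ≤ k → W j ≤ W k := fun h =>
    Submodule.span_mono (Set.image_mono fun p hp => lt_of_lt_of_le hp h)
  have key : ∀ j, ∀ hj : j < n,
      Module.finrank F (W j) + α ≤ Module.finrank F (W (j+1)) + j * β := by
    intro j hj
    set jf : Fin n := ⟨j, hj⟩ with hjf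
    set π : (Fin n × Fin α → F) →ₗ[F] (Fin α → F) :=
      LinearMap.funLeft F F (fun a => (jf, a)) with hπ
    have hcol : ∀ (i : Fin n) (a : Fin α), π (Hᵀ (i, a)) = (A jf i)ᵀ a := by
      intro i a
      funext b
      simp [hπ, LinearMap.funLeft_apply, Matrix.transpose_apply, hH]
    have htop : (W (j+1)).map π = ⊤ := by
      rw [eq_top_iff, ← (Pi.basisFun F (Fin α)).span_eq]
      apply Submodule.span_le.2
      rintro _ ⟨a, rfl⟩
      refine ⟨Hᵀ (jf, a), Submodule.subset_span ⟨(jf, a), by simp [hjf], rfl⟩, ?_⟩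
      rw [hcol]
      funext b
      simp [Pi.basisFun_apply, Matrix.transpose_apply, hdiag, Matrix.one_apply,
        Pi.single_apply, eq_comm]
    set s : Finset (Fin n) := Finset.univ.filter (fun i : Fin n => (i : ℕ) < j) with hs
    have hsub : (W j).map π ≤ ⨆ i ∈ s, Submodule.span F (Set.range (A jf i)ᵀ) := by
      rw [Submodule.map_span]
      apply Submodule.span_le.2
      rintro _ ⟨_, ⟨⟨i, a⟩, hp, rfl⟩, rfl⟩
      rw [hcol]
      refine Submodule.mem_iSup_of_mem i (Submodule.mem_iSup_of_mem ?_ ?_)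
      · exact Finset.mem_filter.2 ⟨Finset.mem_univ _, hp⟩
      · exact Submodule.subset_span ⟨a, rfl⟩
    have hcard : s.card = j := by
      have hmap : s = Finset.univ.map (Fin.castLEEmb hj.le) := by
        ext i
        simp only [hs, Finset.mem_filter, Finset.mem_univ, true_and, Finset.mem_map,
          Fin.castLEEmb_apply]
        constructor
        · intro hi
          exact ⟨⟨(i : ℕ), hi⟩, Fin.ext rfl⟩
        · rintro ⟨k, rfl⟩
          exact k.isLt
      rw [hmap, Finset.card_map, Finset.card_univ, Fintype.card_fin]
    have hsmall : Module.finrank F ((W j).map π) ≤ j * β := by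
      calc Module.finrank F ((W j).map π)
          ≤ Module.finrank F ↥(⨆ i ∈ s, Submodule.span F (Set.range (A jf i)ᵀ)) :=
            Submodule.finrank_mono hsub
        _ ≤ ∑ i ∈ s, Module.finrank F ↥(Submodule.span F (Set.range (A jf i)ᵀ)) :=
            finrank_biSup_le _ _
        _ ≤ ∑ _i ∈ s, β := by
            apply Finset.sum_le_sum
            intro i hi
            have hij : jf ≠ i := by
              rintro rfl
              rw [Finset.mem_filter] at hi
              exact absurd hi.2 (lt_irrefl j)
            have hr := Matrix.rank_eq_finrank_span_cols (A jf i)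
            exact hr.symm.le.trans (hoff jf i hij)
        _ = s.card * β := by rw [Finset.sum_const, smul_eq_mul]
        _ = j * β := by rw [hcard]
    have hex := finrank_exchange π (hWmono (by omega : j ≤ j + 1))
    rw [htop] at hex
    rw [finrank_top] at hex
    rw [Module.finrank_pi, Fintype.card_fin] at hex
    omega
  have main : ∀ m, m ≤ n → ∑ j ∈ Finset.range m, (α - j * β) ≤ Module.finrank F (W m) := by
    intro m
    induction m with
    | zero => simp
    | succ m ih =>
      intro hm
      have h1 := ih (Nat.le_of_succ_le hm)
      have h2 := key m hm
      have h3 : Module.finrank F (W m) ≤ Module.finrank F (W (m+1)) :=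
        Submodule.finrank_mono (hWmono (Nat.le_succ m))
      rw [Finset.sum_range_succ]
      omega
  have hWn : W n = Submodule.span F (Set.range Hᵀ) := by
    have himg : (Set.image Hᵀ ({p : Fin n × Fin α | (p.1 : ℕ) < n})) = Set.range Hᵀ := by
      have hset : ({p : Fin n × Fin α | (p.1 : ℕ) < n}) = Set.univ := by
        ext p
        simp [p.1.isLt]
      rw [hset]
      exact Set.image_univ
    show Submodule.span F _ = _
    rw [himg]
  have hfinal := main n le_rfl
  rw [hWn] at hfinal
  rwa [Matrix.rank_eq_finrank_span_cols]
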